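/- Asymmetric interpolation inequality: let n ≥ 1, a, b ≥ 0 and p, q > 0. Then for all u : ℤ^n → ℂ with ‖u‖_{a+p+q} < ∞ and v : ℤ^n → ℂ with ‖v‖_{b+p+q} < ∞ one has ‖u‖_{a+p} ‖v‖_{b+q} ≤ ‖u‖_{a+p+q} ‖v‖_b + ‖u‖_a ‖v‖_{b+p+q}. -/

import Mathlib

open scoped ENNReal NNReal

/-- The weight `⟨k⟩ = max(1,|k|)` with `|k|` the sup norm of `k ∈ ℤⁿ`. -/
noncomputable def wgt {n : ℕ} (k : Fin n → ℤ) : ℝ≥0∞ :=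
  ((max 1 (Finset.univ.sup fun i => (k i).natAbs) : ℕ) : ℝ≥0∞)

/-- The weighted ℓ² norm `‖u‖ₛ = (Σ_k ⟨k⟩^{2s}|u_k|²)^{1/2}` (possibly `+∞`). -/
noncomputable def wnorm (n : ℕ) (s : ℝ) (u : (Fin n → ℤ) → ℂ) : ℝ≥0∞ :=
  (∑' k : Fin n → ℤ, wgt k ^ (2 * s) * (‖u k‖₊ : ℝ≥0∞) ^ (2 : ℕ)) ^ (1 / 2 : ℝ)

lemma wgt_ne_zero {n : ℕ} (k : Fin n → ℤ) : wgt k ≠ 0 := by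
  simp [wgt]

lemma wgt_ne_top {n : ℕ} (k : Fin n → ℤ) : wgt k ≠ ⊤ := by
  simp [wgt]

/-- Key pointwise weight inequality. -/
lemma wgt_key {n : ℕ} (a b p q : ℝ) (hp : 0 ≤ p) (hq : 0 ≤ q) (k k' : Fin n → ℤ) :
    wgt k ^ (2 * (a + p)) * wgt k' ^ (2 * (b + q)) ≤
      wgt k ^ (2 * (a + p + q)) * wgt k' ^ (2 * b) +
        wgt k ^ (2 * a) * wgt k' ^ (2 * (b + p + q)) := by
  have hx0 := wgt_ne_zero k; have hxt := wgt_ne_top k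
  have hy0 := wgt_ne_zero k'; have hyt := wgt_ne_top k'
  rcases le_total (wgt k') (wgt k) with h | h
  · refine le_trans ?_ (le_add_of_nonneg_right zero_le)
    have e1 : (2 : ℝ) * (a + p + q) = 2 * (a + p) + 2 * q := by ring
    have e2 : (2 : ℝ) * (b + q) = 2 * b + 2 * q := by ring
    rw [e1, e2, ENNReal.rpow_add _ _ hx0 hxt, ENNReal.rpow_add _ _ hy0 hyt]
    calc wgt k ^ (2 * (a + p)) * (wgt k' ^ (2 * b) * wgt k' ^ (2 * q))
        ≤ wgt k ^ (2 * (a + p)) * (wgt k' ^ (2 * b) * wgt k ^ (2 * q)) := by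
          gcongr
      _ = wgt k ^ (2 * (a + p)) * wgt k ^ (2 * q) * wgt k' ^ (2 * b) := by ring
  · refine le_trans ?_ (le_add_of_nonneg_left zero_le)
    have e1 : (2 : ℝ) * (b + p + q) = 2 * (b + q) + 2 * p := by ring
    have e2 : (2 : ℝ) * (a + p) = 2 * a + 2 * p := by ring
    rw [e1, e2, ENNReal.rpow_add _ _ hx0 hxt, ENNReal.rpow_add _ _ hy0 hyt]
    calc wgt k ^ (2 * a) * wgt k ^ (2 * p) * wgt k' ^ (2 * (b + q))
        ≤ wgt k ^ (2 * a) * wgt k' ^ (2 * p) * wgt k' ^ (2 * (b + q)) := by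
          gcongr
      _ = wgt k ^ (2 * a) * (wgt k' ^ (2 * (b + q)) * wgt k' ^ (2 * p)) := by ring

/-- Asymmetric interpolation inequality:
`‖u‖_{a+p} ‖v‖_{b+q} ≤ ‖u‖_{a+p+q} ‖v‖_b + ‖u‖_a ‖v‖_{b+p+q}`. -/
theorem asymmetric_interpolation (n : ℕ) (hn : 1 ≤ n)
    (a b p q : ℝ) (ha : 0 ≤ a) (hb : 0 ≤ b) (hp : 0 < p) (hq : 0 < q)
    (u v : (Fin n → ℤ) → ℂ)
    (hu : wnorm n (a + p + q) u < ⊤) (hv : wnorm n (b + p + q) v < ⊤) :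
    wnorm n (a + p) u * wnorm n (b + q) v ≤
      wnorm n (a + p + q) u * wnorm n b v + wnorm n a u * wnorm n (b + p + q) v := by
  set S : ℝ → ((Fin n → ℤ) → ℂ) → ℝ≥0∞ :=
    fun s w => ∑' k : Fin n → ℤ, wgt k ^ (2 * s) * (‖w k‖₊ : ℝ≥0∞) ^ (2 : ℕ) with hS
  have hw : ∀ s w, wnorm n s w = S s w ^ (1 / 2 : ℝ) := fun s w => rfl
  have prod_eq : ∀ (s t : ℝ), S s u * S t v =
      ∑' k : Fin n → ℤ, ∑' k' : Fin n → ℤ,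
        (wgt k ^ (2 * s) * (‖u k‖₊ : ℝ≥0∞) ^ (2 : ℕ)) *
          (wgt k' ^ (2 * t) * (‖v k'‖₊ : ℝ≥0∞) ^ (2 : ℕ)) := by
    intro s t
    rw [hS]
    simp only [ENNReal.tsum_mul_left]
    rw [ENNReal.tsum_mul_right]
  have key : S (a + p) u * S (b + q) v ≤
      S (a + p + q) u * S b v + S a u * S (b + p + q) v := by
    rw [prod_eq, prod_eq, prod_eq, ← ENNReal.tsum_add]
    refine ENNReal.tsum_le_tsum fun k => ?_
    rw [← ENNReal.tsum_add]
    refine ENNReal.tsum_le_tsum fun k' => ?_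
    have := wgt_key a b p q hp.le hq.le k k'
    calc wgt k ^ (2 * (a + p)) * (‖u k‖₊ : ℝ≥0∞) ^ (2 : ℕ) *
          (wgt k' ^ (2 * (b + q)) * (‖v k'‖₊ : ℝ≥0∞) ^ (2 : ℕ))
        = (wgt k ^ (2 * (a + p)) * wgt k' ^ (2 * (b + q))) *
            ((‖u k‖₊ : ℝ≥0∞) ^ (2 : ℕ) * (‖v k'‖₊ : ℝ≥0∞) ^ (2 : ℕ)) := by ring
      _ ≤ (wgt k ^ (2 * (a + p + q)) * wgt k' ^ (2 * b) +
            wgt k ^ (2 * a) * wgt k' ^ (2 * (b + p + q))) *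
            ((‖u k‖₊ : ℝ≥0∞) ^ (2 : ℕ) * (‖v k'‖₊ : ℝ≥0∞) ^ (2 : ℕ)) := by gcongr
      _ = wgt k ^ (2 * (a + p + q)) * (‖u k‖₊ : ℝ≥0∞) ^ (2 : ℕ) *
            (wgt k' ^ (2 * b) * (‖v k'‖₊ : ℝ≥0∞) ^ (2 : ℕ)) +
          wgt k ^ (2 * a) * (‖u k‖₊ : ℝ≥0∞) ^ (2 : ℕ) *
            (wgt k' ^ (2 * (b + p + q)) * (‖v k'‖₊ : ℝ≥0∞) ^ (2 : ℕ)) := by ring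
  calc wnorm n (a + p) u * wnorm n (b + q) v
      = (S (a + p) u * S (b + q) v) ^ (1 / 2 : ℝ) := by
        rw [hw, hw, ← ENNReal.mul_rpow_of_nonneg _ _ (by norm_num)]
    _ ≤ (S (a + p + q) u * S b v + S a u * S (b + p + q) v) ^ (1 / 2 : ℝ) := by
        exact ENNReal.rpow_le_rpow key (by norm_num)
    _ ≤ (S (a + p + q) u * S b v) ^ (1 / 2 : ℝ) + (S a u * S (b + p + q) v) ^ (1 / 2 : ℝ) :=
        ENNReal.rpow_add_le_add_rpow _ _ (by norm_num) (by norm_num)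
    _ = wnorm n (a + p + q) u * wnorm n b v + wnorm n a u * wnorm n (b + p + q) v := by
        rw [hw, hw, hw, hw, ← ENNReal.mul_rpow_of_nonneg _ _ (by norm_num),
          ← ENNReal.mul_rpow_of_nonneg _ _ (by norm_num)]
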